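/- Let k_x, k_y, k_z be pairwise linearly independent nonzero vectors in a complex Hilbert space H. Let P be the orthogonal projection onto the orthogonal complement of ℂk_x, and set j_y = Pk_y, j_z = Pk_z (both nonzero by independence). Write δ_{αβ} = √(1 − |⟨k_α,k_β⟩|²/(‖k_α‖²‖k_β‖²)) for α,β ∈ {x,y,z}, and let Υ = Re( ⟨k̂_x,k̂_y⟩·⟨k̂_y,k̂_z⟩·⟨k̂_z,k̂_x⟩ ), where k̂ denotes the normalized vector. Then the distance δ_J(y,z) = √(1 − |⟨j_y,j_z⟩|²/(‖j_y‖²‖j_z‖²)) satisfies δ_J(y,z)² = (δ_{xy}² + δ_{xz}² + δ_{zy}² − 2 + 2Υ) / (δ_{xy}²·δ_{xz}²). -/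

import Mathlib

variable {H : Type*} [NormedAddCommGroup H] [InnerProductSpace ℂ H]

/-- `δ(a,b) = √(1 − |⟨a,b⟩|²/(‖a‖²‖b‖²))`, the RKHS distance computed from
two (not necessarily normalized) kernel vectors. -/
noncomputable def deltaPair (a b : H) : ℝ :=
  Real.sqrt (1 - ‖(inner ℂ a b : ℂ)‖ ^ 2 / (‖a‖ ^ 2 * ‖b‖ ^ 2))

/-- The projection `j_y = P k_y` of `k_y` onto the orthogonal complement of
`ℂ k_x` (the kernel vector of the subspace of functions vanishing at `x`). -/
noncomputable def jvec [CompleteSpace H] (kx y : H) : H :=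
  (Submodule.orthogonalProjection ((ℂ ∙ kx)ᗮ) y : H)

private lemma rcCoeEq (r : ℝ) : (RCLike.ofReal r : ℂ) = Complex.ofReal r := rfl

private lemma deltaPair_sq (u v : H) :
    deltaPair u v ^ 2 = 1 - ‖(inner ℂ u v : ℂ)‖ ^ 2 / (‖u‖ ^ 2 * ‖v‖ ^ 2) := by
  rw [deltaPair, Real.sq_sqrt]
  have h := norm_inner_le_norm (𝕜 := ℂ) u v
  have h2 : ‖(inner ℂ u v : ℂ)‖ ^ 2 ≤ ‖u‖ ^ 2 * ‖v‖ ^ 2 := by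
    rw [← mul_pow]; exact pow_le_pow_left₀ (norm_nonneg _) h 2
  have := div_le_one_of_le₀ h2 (by positivity)
  linarith

private lemma strictCS (u v : H) (h : LinearIndependent ℂ ![u, v]) :
    ‖(inner ℂ u v : ℂ)‖ < ‖u‖ * ‖v‖ := by
  have hu : u ≠ 0 := by simpa using h.ne_zero 0
  have hv : v ≠ 0 := by simpa using h.ne_zero 1
  refine lt_of_le_of_ne (norm_inner_le_norm u v) fun heq => ?_
  obtain ⟨r, hr, rfl⟩ := (norm_inner_eq_norm_iff hu hv).1 heq
  have := (linearIndependent_fin2.1 h).2 r⁻¹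
  exact this (by simp [smul_smul, inv_mul_cancel₀ hr])

private lemma realId (a b c P Q R T : ℝ) (ha : 0 < a) (hP : 0 ≤ P) (hQ : 0 ≤ Q)
    (hPl : P < a * b) (hQl : Q < a * c) :
    1 - (R - 2 * T / a + P * Q / a ^ 2) / ((b - P / a) * (c - Q / a))
      = ((1 - P / (a * b)) + (1 - Q / (a * c)) + (1 - R / (c * b)) - 2 + 2 * T / (a * b * c))
        / ((1 - P / (a * b)) * (1 - Q / (a * c))) := by
  have hb : 0 < b := by nlinarith
  have hc : 0 < c := by nlinarith
  have h1 : (0:ℝ) < b - P / a := by rw [sub_pos, div_lt_iff₀ ha]; nlinarith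
  have h2 : (0:ℝ) < c - Q / a := by rw [sub_pos, div_lt_iff₀ ha]; nlinarith
  have h3 : (0:ℝ) < 1 - P / (a * b) := by
    rw [sub_pos, div_lt_one (by positivity)]; nlinarith
  have h4 : (0:ℝ) < 1 - Q / (a * c) := by
    rw [sub_pos, div_lt_one (by positivity)]; nlinarith
  have hb1 : (0:ℝ) < a * b - P := by nlinarith
  have hb2 : (0:ℝ) < a * c - Q := by nlinarith
  have hBC : (b - P / a) * (c - Q / a) = (a * b - P) * (a * c - Q) / a ^ 2 := by
    field_simp
  rw [eq_div_iff (by positivity), hBC, div_div_eq_mul_div]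
  field_simp [hb1.ne', hb2.ne']
  ring

private lemma normW (a : ℝ) (ha : a ≠ 0) (p q r : ℂ) :
    ‖r - starRingEnd ℂ p * q / ((a : ℝ) : ℂ)‖ ^ 2
      = ‖r‖ ^ 2 - 2 * (p * r * starRingEnd ℂ q).re / a + ‖p‖ ^ 2 * ‖q‖ ^ 2 / a ^ 2 := by
  simp only [Complex.sq_norm, Complex.normSq_apply, Complex.sub_re,
    Complex.sub_im, Complex.div_re, Complex.div_im, Complex.mul_re, Complex.mul_im,
    Complex.conj_re, Complex.conj_im, Complex.ofReal_re, Complex.ofReal_im]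
  field_simp
  ring

theorem delta_invariant_subspace_three_points [CompleteSpace H]
    (kx ky kz : H) (hx : kx ≠ 0) (hy : ky ≠ 0) (hz : kz ≠ 0)
    (hxy : LinearIndependent ℂ ![kx, ky]) (hxz : LinearIndependent ℂ ![kx, kz])
    (hyz : LinearIndependent ℂ ![ky, kz]) :
    deltaPair (jvec kx ky) (jvec kx kz) ^ 2
      = (deltaPair kx ky ^ 2 + deltaPair kx kz ^ 2 + deltaPair kz ky ^ 2 - 2
          + 2 * ((inner ℂ (‖kx‖⁻¹ • kx) (‖ky‖⁻¹ • ky) : ℂ)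
              * (inner ℂ (‖ky‖⁻¹ • ky) (‖kz‖⁻¹ • kz) : ℂ)
              * (inner ℂ (‖kz‖⁻¹ • kz) (‖kx‖⁻¹ • kx) : ℂ)).re)
        / (deltaPair kx ky ^ 2 * deltaPair kx kz ^ 2) := by
  have hxn : (0:ℝ) < ‖kx‖ := norm_pos_iff.2 hx
  have hyn : (0:ℝ) < ‖ky‖ := norm_pos_iff.2 hy
  have hzn : (0:ℝ) < ‖kz‖ := norm_pos_iff.2 hz
  have ha : (0:ℝ) < ‖kx‖ ^ 2 := by positivity
  have hK : ((‖kx‖ : ℂ)) ≠ 0 := by exact_mod_cast hxn.ne'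
  -- the projection formula
  have hj : ∀ w : H, jvec kx w = w - ((inner ℂ kx w : ℂ) / ((‖kx‖ ^ 2 : ℝ) : ℂ)) • kx := by
    intro w
    rw [jvec, Submodule.coe_orthogonalProjectionOnto_apply, Submodule.starProjection_orthogonal_val,
      Submodule.starProjection_singleton]
    norm_cast
  -- inner product of the two projections
  have hinner : (inner ℂ (jvec kx ky) (jvec kx kz) : ℂ)
      = (inner ℂ ky kz : ℂ)
        - starRingEnd ℂ (inner ℂ kx ky : ℂ) * (inner ℂ kx kz : ℂ) / ((‖kx‖ ^ 2 : ℝ) : ℂ) := by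
    rw [hj ky, hj kz]
    simp only [inner_sub_left, inner_sub_right, inner_smul_left, inner_smul_right,
      inner_self_eq_norm_sq_to_K, map_div₀, Complex.conj_ofReal]
    rw [show (inner ℂ ky kx : ℂ) = starRingEnd ℂ (inner ℂ kx ky : ℂ) from (inner_conj_symm ky kx).symm]
    push_cast
    field_simp
    simp only [rcCoeEq]
    ring
  -- norms of the projections
  have hnorm : ∀ w : H, ‖jvec kx w‖ ^ 2
      = ‖w‖ ^ 2 - ‖(inner ℂ kx w : ℂ)‖ ^ 2 / ‖kx‖ ^ 2 := by
    intro w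
    rw [hj w]
    have hm : (inner ℂ kx w : ℂ) * starRingEnd ℂ (inner ℂ kx w : ℂ)
        = ((‖(inner ℂ kx w : ℂ)‖ : ℂ)) ^ 2 := RCLike.mul_conj _
    have hm' : starRingEnd ℂ (inner ℂ kx w : ℂ) * (inner ℂ kx w : ℂ)
        = ((‖(inner ℂ kx w : ℂ)‖ : ℂ)) ^ 2 := RCLike.conj_mul _
    have h2 : (inner ℂ (w - ((inner ℂ kx w : ℂ) / ((‖kx‖ ^ 2 : ℝ) : ℂ)) • kx)
                     (w - ((inner ℂ kx w : ℂ) / ((‖kx‖ ^ 2 : ℝ) : ℂ)) • kx) : ℂ)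
        = ((‖w‖ ^ 2 - ‖(inner ℂ kx w : ℂ)‖ ^ 2 / ‖kx‖ ^ 2 : ℝ) : ℂ) := by
      rw [inner_sub_sub_self]
      simp only [inner_smul_left, inner_smul_right, inner_self_eq_norm_sq_to_K, map_div₀,
        Complex.conj_ofReal, norm_smul, norm_div, Complex.norm_real, Real.norm_eq_abs,
        abs_of_nonneg (sq_nonneg ‖kx‖),
        show (inner ℂ w kx : ℂ) = starRingEnd ℂ (inner ℂ kx w : ℂ) from (inner_conj_symm w kx).symm]
      simp only [div_mul_eq_mul_div, hm, hm']
      push_cast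
      field_simp
      have hKK : ((‖kx‖ : ℂ)) ^ 2 * ((‖kx‖ : ℂ))⁻¹ ^ 2 = 1 := by
        rw [← mul_pow, mul_inv_cancel₀ hK, one_pow]
      linear_combination ((‖(inner ℂ kx w : ℂ)‖ : ℂ) ^ 2) * hKK
    have h1 : ((‖w - ((inner ℂ kx w : ℂ) / ((‖kx‖ ^ 2 : ℝ) : ℂ)) • kx‖ ^ 2 : ℝ) : ℂ)
        = (inner ℂ (w - ((inner ℂ kx w : ℂ) / ((‖kx‖ ^ 2 : ℝ) : ℂ)) • kx)
                 (w - ((inner ℂ kx w : ℂ) / ((‖kx‖ ^ 2 : ℝ) : ℂ)) • kx) : ℂ) := by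
      rw [inner_self_eq_norm_sq_to_K]; norm_cast
    exact_mod_cast h1.trans h2
  -- the shape invariant term
  have hsm : ∀ (u v : H) (s t : ℝ),
      (inner ℂ (s • u) (t • v) : ℂ) = ((s * t : ℝ) : ℂ) * inner ℂ u v := by
    intro u v s t
    rw [RCLike.real_smul_eq_coe_smul (K := ℂ) s, RCLike.real_smul_eq_coe_smul (K := ℂ) t,
      inner_smul_left, inner_smul_right, RCLike.conj_ofReal]
    simp only [rcCoeEq]
    push_cast
    ring
  have hup : ((inner ℂ (‖kx‖⁻¹ • kx) (‖ky‖⁻¹ • ky) : ℂ)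
        * (inner ℂ (‖ky‖⁻¹ • ky) (‖kz‖⁻¹ • kz) : ℂ)
        * (inner ℂ (‖kz‖⁻¹ • kz) (‖kx‖⁻¹ • kx) : ℂ)).re
      = ((inner ℂ kx ky : ℂ) * (inner ℂ ky kz : ℂ) * starRingEnd ℂ (inner ℂ kx kz : ℂ)).re
          / (‖kx‖ ^ 2 * ‖ky‖ ^ 2 * ‖kz‖ ^ 2) := by
    rw [hsm, hsm, hsm,
      show (inner ℂ kz kx : ℂ) = starRingEnd ℂ (inner ℂ kx kz : ℂ) from (inner_conj_symm kz kx).symm,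
      show ((((‖kx‖⁻¹ * ‖ky‖⁻¹ : ℝ)) : ℂ) * inner ℂ kx ky)
          * ((((‖ky‖⁻¹ * ‖kz‖⁻¹ : ℝ)) : ℂ) * inner ℂ ky kz)
          * ((((‖kz‖⁻¹ * ‖kx‖⁻¹ : ℝ)) : ℂ) * starRingEnd ℂ (inner ℂ kx kz : ℂ))
        = (((((‖kx‖ ^ 2)⁻¹ * (‖ky‖ ^ 2)⁻¹ * (‖kz‖ ^ 2)⁻¹ : ℝ)) : ℂ)
            * ((inner ℂ kx ky : ℂ) * (inner ℂ ky kz : ℂ) * starRingEnd ℂ (inner ℂ kx kz : ℂ)))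
        from by push_cast; ring,
      Complex.re_ofReal_mul]
    rw [eq_div_iff (by positivity)]
    field_simp
  have hzy : ‖(inner ℂ kz ky : ℂ)‖ = ‖(inner ℂ ky kz : ℂ)‖ := by
    rw [show (inner ℂ kz ky : ℂ) = starRingEnd ℂ (inner ℂ ky kz : ℂ)
      from (inner_conj_symm kz ky).symm, RCLike.norm_conj]
  have hPl : ‖(inner ℂ kx ky : ℂ)‖ ^ 2 < ‖kx‖ ^ 2 * ‖ky‖ ^ 2 := by
    rw [← mul_pow]
    exact pow_lt_pow_left₀ (strictCS kx ky hxy) (norm_nonneg _) (by norm_num)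
  have hQl : ‖(inner ℂ kx kz : ℂ)‖ ^ 2 < ‖kx‖ ^ 2 * ‖kz‖ ^ 2 := by
    rw [← mul_pow]
    exact pow_lt_pow_left₀ (strictCS kx kz hxz) (norm_nonneg _) (by norm_num)
  rw [deltaPair_sq, deltaPair_sq, deltaPair_sq, deltaPair_sq, hinner, hnorm ky, hnorm kz,
    hup, hzy, normW (‖kx‖ ^ 2) ha.ne', ← mul_div_assoc]
  exact realId (‖kx‖ ^ 2) (‖ky‖ ^ 2) (‖kz‖ ^ 2) _ _ _ _ ha (by positivity) (by positivity)
    hPl hQl
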